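/- Let E be a real inner product space, c₁, c₂ ∈ E, r₁, r₂ ≥ 0, and let u ∈ E with ‖u‖ = 1. Then the width of the tuple convexHull(closedBall(c₁, r₁) ∪ closedBall(c₂, r₂)) in direction u, defined as sSup {⟪x, u⟫ : x in the tuple} − sInf {⟪x, u⟫ : x in the tuple}, equals the maximum over i, j ∈ {1, 2} of rᵢ + rⱼ + ⟪cᵢ − cⱼ, u⟫. (This is the paper's width formula w = rᵢ + rⱼ + d(cᵢ, cⱼ)·cos β for the pair of parallel tangent lines perpendicular to u.) -/

import Mathlib

open Metric

/-- The width of a tuple in a unit direction `u` equals the maximum over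
`i, j ∈ {1, 2}` of `rᵢ + rⱼ + ⟪cᵢ - cⱼ, u⟫`. -/
theorem tuple_width
    {E : Type*} [NormedAddCommGroup E] [InnerProductSpace ℝ E]
    (c₁ c₂ : E) (r₁ r₂ : ℝ) (h₁ : 0 ≤ r₁) (h₂ : 0 ≤ r₂)
    (u : E) (hu : ‖u‖ = 1) :
    sSup {y : ℝ | ∃ x ∈ convexHull ℝ (closedBall c₁ r₁ ∪ closedBall c₂ r₂),
        (inner ℝ x u : ℝ) = y} -
      sInf {y : ℝ | ∃ x ∈ convexHull ℝ (closedBall c₁ r₁ ∪ closedBall c₂ r₂),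
        (inner ℝ x u : ℝ) = y} =
      max (max (r₁ + r₁ + (inner ℝ (c₁ - c₁) u : ℝ)) (r₁ + r₂ + (inner ℝ (c₁ - c₂) u : ℝ)))
        (max (r₂ + r₁ + (inner ℝ (c₂ - c₁) u : ℝ)) (r₂ + r₂ + (inner ℝ (c₂ - c₂) u : ℝ))) := by
  have huu : (inner ℝ u u : ℝ) = 1 := by
    rw [real_inner_self_eq_norm_sq, hu]; norm_num
  set f : E → ℝ := fun x => (inner ℝ x u : ℝ) with hf
  have hlin : IsLinearMap ℝ f := ⟨fun x y => inner_add_left x y u,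
    fun c x => real_inner_smul_left x u c⟩
  set a₁ := (inner ℝ c₁ u : ℝ) with ha₁
  set a₂ := (inner ℝ c₂ u : ℝ) with ha₂
  set m := min (a₁ - r₁) (a₂ - r₂) with hm
  set M := max (a₁ + r₁) (a₂ + r₂) with hM
  have hmM : m ≤ M :=
    le_trans (min_le_left _ _) (le_trans (by linarith) (le_max_left _ _))
  -- endpoints
  have hmem : ∀ (c : E) (r : ℝ), 0 ≤ r → ∀ s : ℝ, |s| ≤ 1 →
      c + (s * r) • u ∈ closedBall c r := by
    intro c r hr s hs
    simp only [mem_closedBall, dist_eq_norm, add_sub_cancel_left, norm_smul, hu, mul_one]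
    calc |s * r| = |s| * r := by rw [abs_mul, abs_of_nonneg hr]
    _ ≤ 1 * r := by gcongr
    _ = r := one_mul r
  have hval : ∀ (c : E) (t : ℝ), f (c + t • u) = (inner ℝ c u : ℝ) + t := by
    intro c t
    simp [hf, inner_add_left, real_inner_smul_left, huu, hu]
  have hset : {y : ℝ | ∃ x ∈ convexHull ℝ (closedBall c₁ r₁ ∪ closedBall c₂ r₂),
      (inner ℝ x u : ℝ) = y} = Set.Icc m M := by
    have himg : {y : ℝ | ∃ x ∈ convexHull ℝ (closedBall c₁ r₁ ∪ closedBall c₂ r₂),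
        (inner ℝ x u : ℝ) = y} = f '' (convexHull ℝ (closedBall c₁ r₁ ∪ closedBall c₂ r₂)) := by
      ext y; simp [hf, Set.mem_image, eq_comm]
    rw [himg]
    apply Set.Subset.antisymm
    · rintro y ⟨x, hx, rfl⟩
      have hub : convexHull ℝ (closedBall c₁ r₁ ∪ closedBall c₂ r₂) ⊆ {x | f x ≤ M} := by
        apply convexHull_min _ (convex_halfSpace_le hlin M)
        rintro x (hx | hx)
        · have : f x - a₁ ≤ r₁ := by
            calc f x - a₁ = (inner ℝ (x - c₁) u : ℝ) := by simp [hf, ha₁, inner_sub_left]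
            _ ≤ ‖x - c₁‖ * ‖u‖ := real_inner_le_norm _ _
            _ ≤ r₁ := by rw [hu, mul_one]; exact mem_closedBall_iff_norm.mp hx
          have : f x ≤ a₁ + r₁ := by linarith
          exact le_trans this (le_max_left _ _)
        · have : f x - a₂ ≤ r₂ := by
            calc f x - a₂ = (inner ℝ (x - c₂) u : ℝ) := by simp [hf, ha₂, inner_sub_left]
            _ ≤ ‖x - c₂‖ * ‖u‖ := real_inner_le_norm _ _
            _ ≤ r₂ := by rw [hu, mul_one]; exact mem_closedBall_iff_norm.mp hx
          have : f x ≤ a₂ + r₂ := by linarith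
          exact le_trans this (le_max_right _ _)
      have hlb : convexHull ℝ (closedBall c₁ r₁ ∪ closedBall c₂ r₂) ⊆ {x | m ≤ f x} := by
        apply convexHull_min _ (convex_halfSpace_ge hlin m)
        rintro x (hx | hx)
        · have : a₁ - f x ≤ r₁ := by
            calc a₁ - f x = (inner ℝ (c₁ - x) u : ℝ) := by simp [hf, ha₁, inner_sub_left]
            _ ≤ ‖c₁ - x‖ * ‖u‖ := real_inner_le_norm _ _
            _ ≤ r₁ := by
                rw [hu, mul_one, norm_sub_rev]; exact mem_closedBall_iff_norm.mp hx
          have : a₁ - r₁ ≤ f x := by linarith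
          exact le_trans (min_le_left _ _) this
        · have : a₂ - f x ≤ r₂ := by
            calc a₂ - f x = (inner ℝ (c₂ - x) u : ℝ) := by simp [hf, ha₂, inner_sub_left]
            _ ≤ ‖c₂ - x‖ * ‖u‖ := real_inner_le_norm _ _
            _ ≤ r₂ := by
                rw [hu, mul_one, norm_sub_rev]; exact mem_closedBall_iff_norm.mp hx
          have : a₂ - r₂ ≤ f x := by linarith
          exact le_trans (min_le_right _ _) this
      exact ⟨hlb hx, hub hx⟩
    · -- the image is convex and contains m and M
      have hconv : Convex ℝ (f '' (convexHull ℝ (closedBall c₁ r₁ ∪ closedBall c₂ r₂))) :=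
        Convex.is_linear_image (convex_convexHull ℝ _) hlin
      have hMmem : M ∈ f '' (convexHull ℝ (closedBall c₁ r₁ ∪ closedBall c₂ r₂)) := by
        rcases max_cases (a₁ + r₁) (a₂ + r₂) with ⟨hEq, _⟩ | ⟨hEq, _⟩
        · exact ⟨c₁ + (1 * r₁) • u,
            subset_convexHull ℝ _ (Or.inl (hmem c₁ r₁ h₁ 1 (by norm_num))),
            by rw [hval, one_mul, hM, hEq, ha₁]⟩
        · exact ⟨c₂ + (1 * r₂) • u,
            subset_convexHull ℝ _ (Or.inr (hmem c₂ r₂ h₂ 1 (by norm_num))),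
            by rw [hval, one_mul, hM, hEq, ha₂]⟩
      have hmmem : m ∈ f '' (convexHull ℝ (closedBall c₁ r₁ ∪ closedBall c₂ r₂)) := by
        rcases min_cases (a₁ - r₁) (a₂ - r₂) with ⟨hEq, _⟩ | ⟨hEq, _⟩
        · exact ⟨c₁ + ((-1) * r₁) • u,
            subset_convexHull ℝ _ (Or.inl (hmem c₁ r₁ h₁ (-1) (by norm_num))),
            by rw [hval, hm, hEq, ha₁]; ring⟩
        · exact ⟨c₂ + ((-1) * r₂) • u,
            subset_convexHull ℝ _ (Or.inr (hmem c₂ r₂ h₂ (-1) (by norm_num))),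
            by rw [hval, hm, hEq, ha₂]; ring⟩
      exact hconv.ordConnected.out hmmem hMmem
  rw [hset, csSup_Icc hmM, csInf_Icc hmM]
  simp only [inner_sub_left, ← ha₁, ← ha₂, hm, hM]
  rcases le_total (a₁ + r₁) (a₂ + r₂) with h | h <;>
    rcases le_total (a₁ - r₁) (a₂ - r₂) with h' | h' <;>
    simp [max_def, min_def, h, h'] <;> split_ifs <;> linarith
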